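/- Let P^i = (B_1^i, B_2^i, B_3^i) and P^j = (B_1^j, B_2^j, B_3^j) be two partitions of an ordered list of m items into three bundles, each specified by four cutting points 0 ≤ c_1 ≤ c_2 ≤ c_3 ≤ c_4 ≤ m, where B_1 = {e_1,...,e_{c_1}} ∪ {e_{c_4+1},...,e_m}, B_2 = {e_{c_1+1},...,e_{c_2}} ∪ {e_{c_3+1},...,e_{c_4}}, B_3 = {e_{c_2+1},...,e_{c_3}}. Then P^i and P^j are not fully intersecting: there exist indices a, b ∈ {1,2,3} with B_a^i ∩ B_b^j = ∅. -/
import Mathlib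


/-- The 3-bundle partition of the `m` ordered items determined by four cutting points
`c₁ ≤ c₂ ≤ c₃ ≤ c₄ ≤ m`: bundle 0 is `{e_1,…,e_{c₁}} ∪ {e_{c₄+1},…,e_m}`, bundle 1 is
`{e_{c₁+1},…,e_{c₂}} ∪ {e_{c₃+1},…,e_{c₄}}`, and bundle 2 is `{e_{c₂+1},…,e_{c₃}}`
(0-based indices in `Fin m`). -/
def cutPartition (m : ℕ) (c₁ c₂ c₃ c₄ : ℕ) : Fin 3 → Finset (Fin m)
  | 0 => Finset.univ.filter (fun i : Fin m => i.val < c₁ ∨ c₄ ≤ i.val)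
  | 1 => Finset.univ.filter
      (fun i : Fin m => (c₁ ≤ i.val ∧ i.val < c₂) ∨ (c₃ ≤ i.val ∧ i.val < c₄))
  | 2 => Finset.univ.filter (fun i : Fin m => c₂ ≤ i.val ∧ i.val < c₃)

/-- Two 3-bundle partitions of an ordered list of items, each given by four cutting
points, are never fully intersecting: some bundle of the first is disjoint from some
bundle of the second. -/
theorem cut_partitions_not_fully_intersecting (m : ℕ)
    (c₁ c₂ c₃ c₄ : ℕ) (hc₁ : c₁ ≤ c₂) (hc₂ : c₂ ≤ c₃) (hc₃ : c₃ ≤ c₄) (hc₄ : c₄ ≤ m)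
    (d₁ d₂ d₃ d₄ : ℕ) (hd₁ : d₁ ≤ d₂) (hd₂ : d₂ ≤ d₃) (hd₃ : d₃ ≤ d₄) (hd₄ : d₄ ≤ m) :
    ∃ a b : Fin 3, Disjoint (cutPartition m c₁ c₂ c₃ c₄ a) (cutPartition m d₁ d₂ d₃ d₄ b) := by

  have key : ∀ a b : Fin 3,
      (∀ i : Fin m,
        i ∈ cutPartition m c₁ c₂ c₃ c₄ a → i ∉ cutPartition m d₁ d₂ d₃ d₄ b) →
      ∃ a b : Fin 3,
        Disjoint (cutPartition m c₁ c₂ c₃ c₄ a) (cutPartition m d₁ d₂ d₃ d₄ b) := by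
    intro a b h
    exact ⟨a, b, Finset.disjoint_left.mpr h⟩
  by_cases h1 : c₃ ≤ d₂ ∨ d₃ ≤ c₂
  · refine key 2 2 fun i hi hj => ?_
    simp [cutPartition] at hi hj; omega
  · push_neg at h1
    by_cases h2 : c₂ ≤ d₂ ∧ d₃ ≤ c₃
    · refine key 1 2 fun i hi hj => ?_
      simp [cutPartition] at hi hj; omega
    · by_cases h3 : d₂ ≤ c₂ ∧ c₃ ≤ d₃
      · refine key 2 1 fun i hi hj => ?_
        simp [cutPartition] at hi hj; omega
      · by_cases h4 : c₂ < d₂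
        · -- then c₃ < d₃
          by_cases h5 : d₃ ≤ c₄
          · refine key 0 2 fun i hi hj => ?_
            simp [cutPartition] at hi hj; omega
          · by_cases h6 : d₁ ≤ c₂
            · refine key 2 0 fun i hi hj => ?_
              simp [cutPartition] at hi hj; omega
            · refine key 1 1 fun i hi hj => ?_
              simp [cutPartition] at hi hj; omega
        · -- d₂ ≤ c₂ and d₃ < c₃
          by_cases h5 : c₃ ≤ d₄
          · refine key 2 0 fun i hi hj => ?_
            simp [cutPartition] at hi hj; omega
          · by_cases h6 : c₁ ≤ d₂
            · refine key 0 2 fun i hi hj => ?_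
              simp [cutPartition] at hi hj; omega
            · refine key 1 1 fun i hi hj => ?_
              simp [cutPartition] at hi hj; omega
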